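/- Let p be a prime and n a positive integer with base-p expansion n = ∑_{i=0}^M a_i p^i (digits 0 ≤ a_i ≤ p-1, a_M ≠ 0), and suppose n ≠ p^{M+1} - 1. Let i_0 = min{ i : a_i ≠ p-1 } and set k = p^M - 1. Then ⌊n/p^r⌋ - ⌊k/p^r⌋ - ⌊(n-k)/p^r⌋ equals 0 for 1 ≤ r ≤ i_0 and equals 1 for i_0 + 1 ≤ r ≤ M; consequently ∑_{r≥1} (⌊n/p^r⌋ - ⌊k/p^r⌋ - ⌊(n-k)/p^r⌋) = M - i_0. -/

import Mathlib

/-- Let `p` be a prime and `n` a positive integer with base-`p` expansion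
`n = ∑_{i=0}^M a_i p^i` (digits `0 ≤ a_i ≤ p-1`, `a_M ≠ 0`), with `n ≠ p^{M+1} - 1`.
Let `i₀ = min{i : a_i ≠ p-1}` (characterized by `a i₀ ≠ p-1` and `a j = p-1` for `j < i₀`)
and set `k = p^M - 1`. Then `⌊n/p^r⌋ - ⌊k/p^r⌋ - ⌊(n-k)/p^r⌋` equals `0` for `1 ≤ r ≤ i₀`
and `1` for `i₀ + 1 ≤ r ≤ M`; consequently the sum over `r ≥ 1` (truncated at `r = n`,
beyond which all terms vanish) equals `M - i₀`. -/
theorem floor_diff_for_special_k (p n M : ℕ) (a : ℕ → ℕ) (hp : p.Prime) (hn : 0 < n)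
    (ha : ∀ i ≤ M, a i ≤ p - 1) (haM : a M ≠ 0)
    (hsum : n = ∑ i ∈ Finset.range (M + 1), a i * p ^ i)
    (hne : n ≠ p ^ (M + 1) - 1)
    (i₀ : ℕ) (hi₀ : a i₀ ≠ p - 1) (hi₀' : ∀ j < i₀, a j = p - 1)
    (k : ℕ) (hk : k = p ^ M - 1) :
    (∀ r, 1 ≤ r → r ≤ i₀ →
        (↑(n / p ^ r) - ↑(k / p ^ r) - ↑((n - k) / p ^ r) : ℤ) = 0) ∧
    (∀ r, i₀ + 1 ≤ r → r ≤ M →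
        (↑(n / p ^ r) - ↑(k / p ^ r) - ↑((n - k) / p ^ r) : ℤ) = 1) ∧
    (∑ r ∈ Finset.Icc 1 n, (↑(n / p ^ r) - ↑(k / p ^ r) - ↑((n - k) / p ^ r) : ℤ)
      = (M : ℤ) - (i₀ : ℤ)) := by
  have hp2 : 2 ≤ p := hp.two_le
  -- geometric sum in ℕ
  have geom : ∀ r : ℕ, ∑ i ∈ Finset.range r, (p - 1) * p ^ i = p ^ r - 1 := by
    intro r
    induction r with
    | zero => simp
    | succ r ih =>
      rw [Finset.sum_range_succ, ih, pow_succ]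
      have h1 : 1 ≤ p ^ r := Nat.one_le_pow _ _ (by omega)
      have h2 : (p - 1) * p ^ r = p ^ r * p - p ^ r := by
        rw [Nat.sub_mul, one_mul, mul_comm]
      have h3 : p ^ r ≤ p ^ r * p := Nat.le_mul_of_pos_right _ (by omega)
      omega
  -- i₀ ≤ M
  have hiM : i₀ ≤ M := by
    by_contra h
    push_neg at h
    apply hne
    rw [hsum, ← geom (M + 1)]
    apply Finset.sum_congr rfl
    intro i hi
    have := Finset.mem_range.mp hi
    rw [hi₀' i (by omega)]
  -- tail and head of the digit expansion
  set t : ℕ → ℕ := fun r => ∑ i ∈ Finset.range (M + 1 - r), a (r + i) * p ^ i with ht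
  set m : ℕ → ℕ := fun r => ∑ i ∈ Finset.range r, a i * p ^ i with hm
  have hdecomp : ∀ r ≤ M + 1, n = m r + p ^ r * t r := by
    intro r hr
    rw [hsum, ht, hm]
    simp only
    rw [Finset.mul_sum, Finset.range_eq_Ico,
        ← Finset.sum_Ico_consecutive _ (Nat.zero_le r) hr,
        ← Finset.range_eq_Ico, Finset.sum_Ico_eq_sum_range]
    congr 1
    apply Finset.sum_congr (by congr 1) -- sets
    intro i _
    rw [pow_add]
    ring
  -- lower bound for the tail
  have htlb : ∀ r ≤ M, p ^ (M - r) ≤ t r := by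
    intro r hr
    have hmem : M - r ∈ Finset.range (M + 1 - r) := Finset.mem_range.mpr (by omega)
    have hrM : r + (M - r) = M := by omega
    have hs : a M * p ^ (M - r) ≤ t r := by
      have h := Finset.single_le_sum (f := fun i => a (r + i) * p ^ i)
        (fun i _ => Nat.zero_le _) hmem
      simpa [hrM] using h
    have h1 : 1 ≤ a M := Nat.pos_of_ne_zero haM
    calc p ^ (M - r) = 1 * p ^ (M - r) := (one_mul _).symm
      _ ≤ a M * p ^ (M - r) := Nat.mul_le_mul_right _ h1
      _ ≤ t r := hs
  -- head bounds
  have hmub : ∀ r ≤ M + 1, m r ≤ p ^ r - 1 := by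
    intro r hr
    calc m r ≤ ∑ i ∈ Finset.range r, (p - 1) * p ^ i := by
          apply Finset.sum_le_sum
          intro i hi
          have := Finset.mem_range.mp hi
          exact Nat.mul_le_mul_right _ (ha i (by omega))
      _ = p ^ r - 1 := geom r
  have hmeq : ∀ r ≤ i₀, m r = p ^ r - 1 := by
    intro r hr
    rw [hm]
    simp only
    rw [← geom r]
    apply Finset.sum_congr rfl
    intro i hi
    have := Finset.mem_range.mp hi
    rw [hi₀' i (by omega)]
  have hmlt : ∀ r, i₀ < r → r ≤ M + 1 → m r + 1 ≤ p ^ r - 1 := by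
    intro r h1 h2
    have hmem : i₀ ∈ Finset.range r := Finset.mem_range.mpr h1
    have key : m r + p ^ i₀ ≤ p ^ r - 1 := by
      rw [← geom r, hm]
      simp only
      rw [← Finset.add_sum_erase _ _ hmem,
          ← Finset.add_sum_erase _ (fun i => (p - 1) * p ^ i) hmem]
      have hd : a i₀ * p ^ i₀ + p ^ i₀ ≤ (p - 1) * p ^ i₀ := by
        have ha0 : a i₀ + 1 ≤ p - 1 := by
          have := ha i₀ hiM; omega
        calc a i₀ * p ^ i₀ + p ^ i₀ = (a i₀ + 1) * p ^ i₀ := by ring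
          _ ≤ (p - 1) * p ^ i₀ := Nat.mul_le_mul_right _ ha0
      have hrest : ∑ i ∈ (Finset.range r).erase i₀, a i * p ^ i
          ≤ ∑ i ∈ (Finset.range r).erase i₀, (p - 1) * p ^ i := by
        apply Finset.sum_le_sum
        intro i hi
        have := Finset.mem_range.mp (Finset.mem_of_mem_erase hi)
        exact Nat.mul_le_mul_right _ (ha i (by omega))
      omega
    have : 1 ≤ p ^ i₀ := Nat.one_le_pow _ _ (by omega)
    omega
  -- p^M ≤ n and k ≤ n
  have hpMn : p ^ M ≤ n := by
    have hd := hdecomp M (by omega)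
    have h1 := htlb M le_rfl
    simp only [Nat.sub_self, pow_zero] at h1
    calc p ^ M = p ^ M * 1 := (mul_one _).symm
      _ ≤ p ^ M * t M := Nat.mul_le_mul_left _ h1
      _ ≤ m M + p ^ M * t M := Nat.le_add_left _ _
      _ = n := hd.symm
  have hkn : k ≤ n := by
    have : 1 ≤ p ^ M := Nat.one_le_pow _ _ (by omega)
    omega
  -- k decomposition and division
  have hkeq : ∀ r, 1 ≤ r → r ≤ M → k = (p ^ r - 1) + p ^ r * (p ^ (M - r) - 1) := by
    intro r h1 h2
    rw [hk]
    have hmul : p ^ r * p ^ (M - r) = p ^ M := by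
      rw [← pow_add]; congr 1; omega
    have h3 : p ^ r * (p ^ (M - r) - 1) = p ^ r * p ^ (M - r) - p ^ r := by
      rw [Nat.mul_sub, mul_one]
    have h4 : p ^ r ≤ p ^ M := Nat.pow_le_pow_right (by omega) h2
    have h5 : 1 ≤ p ^ r := Nat.one_le_pow _ _ (by omega)
    omega
  have hkdiv : ∀ r, 1 ≤ r → r ≤ M → k / p ^ r = p ^ (M - r) - 1 := by
    intro r h1 h2
    have hpr : 0 < p ^ r := pow_pos (by omega) _
    rw [hkeq r h1 h2, Nat.add_mul_div_left _ _ hpr, Nat.div_eq_of_lt (by omega), zero_add]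
  -- n division
  have hndiv : ∀ r ≤ M + 1, n / p ^ r = t r := by
    intro r hr
    have hpr : 0 < p ^ r := pow_pos (by omega) _
    have h1 := hmub r hr
    rw [hdecomp r hr, Nat.add_mul_div_left _ _ hpr, Nat.div_eq_of_lt (by omega), zero_add]
  -- (n - k) division, case r ≤ i₀
  have hnk1 : ∀ r, 1 ≤ r → r ≤ i₀ → (n - k) / p ^ r = t r - (p ^ (M - r) - 1) := by
    intro r h1 h2
    have h2M : r ≤ M := le_trans h2 hiM
    have hpr : 0 < p ^ r := pow_pos (by omega) _
    have hB : 1 ≤ p ^ (M - r) := Nat.one_le_pow _ _ (by omega)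
    have htB := htlb r h2M
    have hne' : n = (p ^ r - 1) + p ^ r * t r := by
      rw [hdecomp r (by omega), hmeq r h2]
    have hmul : p ^ r * p ^ (M - r) = p ^ M := by
      rw [← pow_add]; congr 1; omega
    have hsub : n - k = p ^ r * (t r - (p ^ (M - r) - 1)) := by
      have e1 : p ^ r * (t r - (p ^ (M - r) - 1))
          = p ^ r * t r - p ^ r * (p ^ (M - r) - 1) := Nat.mul_sub _ _ _
      have e2 : p ^ r * (p ^ (M - r) - 1) = p ^ M - p ^ r := by
        rw [Nat.mul_sub, mul_one, hmul]
      have e4 : p ^ r ≤ p ^ M := Nat.pow_le_pow_right (by omega) h2M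
      have e5 : p ^ M ≤ p ^ r * t r := by
        rw [← hmul]; exact Nat.mul_le_mul_left _ htB
      rw [hne', hkeq r h1 h2M]
      omega
    rw [hsub, Nat.mul_div_cancel_left _ hpr]
  -- (n - k) division, case i₀ < r ≤ M
  have hnk2 : ∀ r, i₀ + 1 ≤ r → r ≤ M → (n - k) / p ^ r = t r - p ^ (M - r) := by
    intro r h1 h2
    have hpr : 0 < p ^ r := pow_pos (by omega) _
    have hB : 1 ≤ p ^ (M - r) := Nat.one_le_pow _ _ (by omega)
    have htB := htlb r h2
    have hmul : p ^ r * p ^ (M - r) = p ^ M := by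
      rw [← pow_add]; congr 1; omega
    have hmr := hmlt r (by omega) (by omega)
    have hd := hdecomp r (by omega)
    have hX : p ^ r * (t r - p ^ (M - r)) = p ^ r * t r - p ^ M := by
      rw [Nat.mul_sub, hmul]
    have hle : p ^ M ≤ p ^ r * t r := by
      rw [← hmul]; exact Nat.mul_le_mul_left _ htB
    have hsub : n - k = (m r + 1) + p ^ r * (t r - p ^ (M - r)) := by
      rw [hk, hX]
      have h1M : 1 ≤ p ^ M := Nat.one_le_pow _ _ (by omega)
      omega
    rw [hsub, Nat.add_mul_div_left _ _ hpr, Nat.div_eq_of_lt (by omega), zero_add]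
  -- the three parts
  have hprop1 : ∀ r, 1 ≤ r → r ≤ i₀ →
      (↑(n / p ^ r) - ↑(k / p ^ r) - ↑((n - k) / p ^ r) : ℤ) = 0 := by
    intro r h1 h2
    have h2M : r ≤ M := le_trans h2 hiM
    have htB := htlb r h2M
    have hB : 1 ≤ p ^ (M - r) := Nat.one_le_pow _ _ (by omega)
    rw [hndiv r (by omega), hkdiv r h1 h2M, hnk1 r h1 h2]
    omega
  have hprop2 : ∀ r, i₀ + 1 ≤ r → r ≤ M →
      (↑(n / p ^ r) - ↑(k / p ^ r) - ↑((n - k) / p ^ r) : ℤ) = 1 := by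
    intro r h1 h2
    have htB := htlb r h2
    have hB : 1 ≤ p ^ (M - r) := Nat.one_le_pow _ _ (by omega)
    rw [hndiv r (by omega), hkdiv r (by omega) h2, hnk2 r h1 h2]
    omega
  refine ⟨hprop1, hprop2, ?_⟩
  -- terms vanish for r > M
  have hnub : n < p ^ (M + 1) := by
    have h1 : n ≤ p ^ (M + 1) - 1 := by
      rw [hsum, ← geom (M + 1)]
      apply Finset.sum_le_sum
      intro i hi
      have := Finset.mem_range.mp hi
      exact Nat.mul_le_mul_right _ (ha i (by omega))
    have : 1 ≤ p ^ (M + 1) := Nat.one_le_pow _ _ (by omega)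
    omega
  have hbig : ∀ r, M + 1 ≤ r →
      (↑(n / p ^ r) - ↑(k / p ^ r) - ↑((n - k) / p ^ r) : ℤ) = 0 := by
    intro r hr
    have h1 : n < p ^ r := lt_of_lt_of_le hnub (Nat.pow_le_pow_right (by omega) hr)
    rw [Nat.div_eq_of_lt h1, Nat.div_eq_of_lt (by omega), Nat.div_eq_of_lt (by omega)]
    simp
  have hMn : M ≤ n := by
    have h1 : M < 2 ^ M := Nat.lt_two_pow_self
    have h2 : 2 ^ M ≤ p ^ M := Nat.pow_le_pow_left hp2 M
    omega
  have e1 : ∑ r ∈ Finset.Icc 1 n, (↑(n / p ^ r) - ↑(k / p ^ r) - ↑((n - k) / p ^ r) : ℤ)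
      = ∑ r ∈ Finset.Icc 1 M, (↑(n / p ^ r) - ↑(k / p ^ r) - ↑((n - k) / p ^ r) : ℤ) := by
    refine (Finset.sum_subset (Finset.Icc_subset_Icc_right hMn) ?_).symm
    intro x hx1 hx2
    apply hbig
    simp only [Finset.mem_Icc] at hx1 hx2
    omega
  rw [e1]
  have e2 : Finset.Icc 1 M = Finset.Ioc 0 M := by
    rw [← Finset.Icc_add_one_left_eq_Ioc]; rfl
  rw [e2, ← Finset.sum_Ioc_consecutive _ (Nat.zero_le i₀) hiM]
  have e3 : ∑ r ∈ Finset.Ioc 0 i₀, (↑(n / p ^ r) - ↑(k / p ^ r) - ↑((n - k) / p ^ r) : ℤ) = 0 := by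
    apply Finset.sum_eq_zero
    intro r hr
    simp only [Finset.mem_Ioc] at hr
    exact hprop1 r (by omega) hr.2
  have e4 : ∑ r ∈ Finset.Ioc i₀ M, (↑(n / p ^ r) - ↑(k / p ^ r) - ↑((n - k) / p ^ r) : ℤ)
      = (M : ℤ) - (i₀ : ℤ) := by
    rw [Finset.sum_congr rfl (fun r hr => by
      simp only [Finset.mem_Ioc] at hr
      exact hprop2 r (by omega) hr.2)]
    rw [Finset.sum_const, Nat.card_Ioc, nsmul_eq_mul, mul_one]
    omega
  rw [e3, e4, zero_add]
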